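/- arXiv:1802.03546 — 8 statements merged into one kernel-verified Lean document; each statement's English description precedes it below -/
import Mathlib

section
/- Let Γ = (Γ₀, Γ₁, C, s, t, u) be a colored quiver and let f, g ∈ K⟨⟨C⟩⟩ be admissible elements, i.e., for every vertex v the set P_v(supp f) of paths r in Γ with t(r) = v and u(r) ∈ supp f is finite, and similarly for g. Then the product fg is admissible. Consequently the set F_Γ of admissible elements is a K-subalgebra of K⟨⟨C⟩⟩. -/
open scoped BigOperators Classical

/-- The formal monoid algebra `K⟨⟨C⟩⟩` is modeled as functions `FreeMonoid C → K`.
This is its convolution multiplication. -/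
noncomputable def fmaMul {K C : Type*} [Field K] (f g : FreeMonoid C → K) :
    FreeMonoid C → K :=
  fun c => ∑ᶠ p : FreeMonoid C × FreeMonoid C,
    if p.1 * p.2 = c then f p.1 * g p.2 else 0

/-- The identity element of `K⟨⟨C⟩⟩`. -/
noncomputable def fmaOne {K C : Type*} [Field K] : FreeMonoid C → K :=
  fun c => if c = 1 then 1 else 0

/-- The support of an element of `K⟨⟨C⟩⟩`. -/
def fmaSupp {K C : Type*} [Field K] (f : FreeMonoid C → K) : Set (FreeMonoid C) :=
  {c | f c ≠ 0}

/-- A colored quiver `Γ = (Γ₀, Γ₁, C, s, t, u)`. -/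
structure ColoredQuiver where
  V : Type
  A : Type
  Cl : Type
  s : A → V
  t : A → V
  u : A → Cl

/-- Paths in a colored quiver, from a source vertex to a target vertex. -/
inductive CQPath (Γ : ColoredQuiver) : Γ.V → Γ.V → Type
  | nil (v : Γ.V) : CQPath Γ v v
  | cons (r : Γ.A) {w : Γ.V} (p : CQPath Γ (Γ.t r) w) : CQPath Γ (Γ.s r) w

/-- The sequence of colors of a path, as an element of the free monoid on colors. -/
def CQPath.colors {Γ : ColoredQuiver} : ∀ {v w : Γ.V}, CQPath Γ v w → FreeMonoid Γ.Cl
  | _, _, .nil _ => 1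
  | _, _, .cons r p => FreeMonoid.of (Γ.u r) * p.colors

/-- Concatenation of paths. -/
def CQPath.comp {Γ : ColoredQuiver} :
    ∀ {a b c : Γ.V}, CQPath Γ a b → CQPath Γ b c → CQPath Γ a c
  | _, _, _, .nil _, q => q
  | _, _, _, .cons r p, q => .cons r (p.comp q)

/-- `P_v(B)`: the set of paths with target `v` whose color sequence lies in `B`
(paths are recorded together with their source vertex). -/
def pathsTo (Γ : ColoredQuiver) (v : Γ.V) (B : Set (FreeMonoid Γ.Cl)) :
    Set (Σ w : Γ.V, CQPath Γ w v) :=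
  {p | p.2.colors ∈ B}

/-- An element of `K⟨⟨C⟩⟩` is admissible if `P_v(supp f)` is finite for every vertex. -/
def Admissible {K : Type*} [Field K] (Γ : ColoredQuiver) (f : FreeMonoid Γ.Cl → K) : Prop :=
  ∀ v : Γ.V, (pathsTo Γ v (fmaSupp f)).Finite


lemma CQPath.split {Γ : ColoredQuiver} {w v : Γ.V} (r : CQPath Γ w v) :
    ∀ (p1 p2 : FreeMonoid Γ.Cl), r.colors = p1 * p2 →
    ∃ (m : Γ.V) (r1 : CQPath Γ w m) (r2 : CQPath Γ m v),
      r1.comp r2 = r ∧ r1.colors = p1 ∧ r2.colors = p2 := by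
  induction r with
  | nil v =>
    intro p1 p2 h
    have h1 : FreeMonoid.toList p1 ++ FreeMonoid.toList p2 = [] := by
      simpa [CQPath.colors] using (congrArg FreeMonoid.toList h).symm
    rw [List.append_eq_nil_iff] at h1
    refine ⟨v, .nil v, .nil v, rfl, ?_, ?_⟩ <;>
      [exact (FreeMonoid.toList.injective (by simp [CQPath.colors, h1.1])).symm;
       exact (FreeMonoid.toList.injective (by simp [CQPath.colors, h1.2])).symm]
  | cons a p ih =>
    intro p1 p2 h
    induction p1 using FreeMonoid.casesOn with
    | one =>
      exact ⟨_, .nil _, .cons a p, rfl, rfl, by simpa using h⟩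
    | of_mul x xs =>
      have h' : FreeMonoid.of (Γ.u a) * p.colors = FreeMonoid.of x * (xs * p2) := by
        simpa [CQPath.colors, mul_assoc] using h
      have hx : Γ.u a = x ∧ p.colors = xs * p2 := by
        have := congrArg FreeMonoid.toList h'
        have h3 := (by simpa using this : Γ.u a = x ∧ FreeMonoid.toList p.colors = FreeMonoid.toList xs ++ FreeMonoid.toList p2)
        exact ⟨h3.1, FreeMonoid.toList.injective (by simpa using h3.2)⟩
      obtain ⟨m, r1, r2, hc, h1, h2⟩ := ih _ _ hx.2
      refine ⟨m, .cons a r1, r2, by simp [CQPath.comp, hc], ?_, h2⟩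
      simp [CQPath.colors, h1, hx.1]

lemma colors_eq_one {Γ : ColoredQuiver} {w v : Γ.V} (r : CQPath Γ w v)
    (h : r.colors = 1) :
    (⟨w, r⟩ : Σ w : Γ.V, CQPath Γ w v) = ⟨v, CQPath.nil v⟩ := by
  cases r with
  | nil => rfl
  | cons a p =>
    exfalso
    have := congrArg FreeMonoid.toList h
    simp [CQPath.colors] at this

/-- the product of admissible elements is admissible; consequently the set
`F_Γ` of admissible elements is a `K`-subalgebra of `K⟨⟨C⟩⟩`. -/
theorem admissible_closed (K : Type*) [Field K] (Γ : ColoredQuiver)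
    (f g : FreeMonoid Γ.Cl → K) (hf : Admissible Γ f) (hg : Admissible Γ g) :
    Admissible Γ (fmaMul f g) ∧
    Admissible Γ (f + g) ∧
    (∀ a : K, Admissible Γ (a • f)) ∧
    Admissible Γ (fmaOne : FreeMonoid Γ.Cl → K) := by
  refine ⟨?_, ?_, ?_, ?_⟩
  · intro v
    have hfin : (⋃ q ∈ pathsTo Γ v (fmaSupp g),
        (fun p : Σ w : Γ.V, CQPath Γ w q.1 => (⟨p.1, p.2.comp q.2⟩ : Σ w : Γ.V, CQPath Γ w v)) ''
          (pathsTo Γ q.1 (fmaSupp f))).Finite :=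
      Set.Finite.biUnion (hg v) (fun q _ => ((hf q.1).image _))
    refine hfin.subset ?_
    rintro ⟨w, r⟩ hr
    have hne : fmaMul f g r.colors ≠ 0 := hr
    have : ∃ p : FreeMonoid Γ.Cl × FreeMonoid Γ.Cl,
        (if p.1 * p.2 = r.colors then f p.1 * g p.2 else 0) ≠ 0 := by
      by_contra hc
      push_neg at hc
      exact hne (by simpa [fmaMul] using finsum_eq_zero_of_forall_eq_zero hc)
    obtain ⟨⟨p1, p2⟩, hp⟩ := this
    by_cases heq : p1 * p2 = r.colors
    · simp only [heq, if_true] at hp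
      obtain ⟨m, r1, r2, hc, h1, h2⟩ := r.split p1 p2 heq.symm
      refine Set.mem_biUnion (show (⟨m, r2⟩ : Σ w, CQPath Γ w v) ∈ pathsTo Γ v (fmaSupp g) from ?_) ?_
      · exact fun h0 => hp (mul_eq_zero.mpr (Or.inr (h2 ▸ h0)))
      · exact ⟨⟨w, r1⟩, fun h0 => hp (mul_eq_zero.mpr (Or.inl (h1 ▸ h0))), by simp [hc]⟩
    · simp [heq] at hp
  · intro v
    refine ((hf v).union (hg v)).subset ?_
    rintro ⟨w, r⟩ hr
    have : f r.colors ≠ 0 ∨ g r.colors ≠ 0 := by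
      by_contra hc
      push_neg at hc
      exact hr (show f r.colors + g r.colors = 0 by simp [hc.1, hc.2])
    exact this.imp (fun h => h) (fun h => h)
  · intro a v
    refine (hf v).subset ?_
    rintro ⟨w, r⟩ hr
    intro h0
    exact hr (show a * f r.colors = 0 by simp [h0])
  · intro v
    refine (Set.finite_singleton (⟨v, CQPath.nil v⟩ : Σ w, CQPath Γ w v)).subset ?_
    rintro ⟨w, r⟩ hr
    have h1 : r.colors = 1 := by
      by_contra h
      exact hr (show fmaOne r.colors = 0 by simp [fmaOne, h])
    exact colors_eq_one r h1
end

section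
/- Let Γ be a colored quiver, f ∈ F_Γ admissible, and v a vertex. Every path in P_v(supp(fg)) factors as r'r'' where r'' ∈ P_v(supp g) and r' ∈ P_{s(r'')}(supp f). In particular, if P_v(supp g) = {r₁, …, r_n} is finite and each P_{s(r_i)}(supp f) is finite, then P_v(supp(fg)) is finite. -/
open scoped BigOperators Classical

lemma cq_split {Γ : ColoredQuiver} : ∀ {u v : Γ.V} (q : CQPath Γ u v)
    (a b : FreeMonoid Γ.Cl), q.colors = a * b →
    ∃ (w : Γ.V) (p' : CQPath Γ u w) (p'' : CQPath Γ w v),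
      q = p'.comp p'' ∧ p'.colors = a ∧ p''.colors = b := by
  intro u v q
  induction q with
  | nil w =>
    intro a b h
    have h1 : a = 1 ∧ b = 1 := by
      constructor
      · exact FreeMonoid.toList.injective (List.append_eq_nil_iff.mp h.symm).1
      · exact FreeMonoid.toList.injective (List.append_eq_nil_iff.mp h.symm).2
    exact ⟨w, .nil w, .nil w, rfl, h1.1.symm ▸ rfl, h1.2.symm ▸ rfl⟩
  | cons r p ih =>
    intro a b h
    rcases ha : FreeMonoid.toList a with _ | ⟨c, l⟩
    · have : a = 1 := FreeMonoid.toList.injective ha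
      subst this
      exact ⟨_, .nil _, .cons r p, rfl, rfl, by simpa using h⟩
    · have hsplit : Γ.u r :: (CQPath.colors p).toList = (c :: l) ++ b.toList := by
        have := congrArg FreeMonoid.toList h
        simpa [CQPath.colors, ha] using this
      have hc : c = Γ.u r := (List.cons.injEq _ _ _ _ |>.mp hsplit).1.symm
      have hpl : (CQPath.colors p) = FreeMonoid.ofList l * b := by
        apply FreeMonoid.toList.injective
        simpa using (List.cons.injEq _ _ _ _ |>.mp hsplit).2
      obtain ⟨w, p', p'', heq, h1, h2⟩ := ih (FreeMonoid.ofList l) b hpl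
      refine ⟨w, .cons r p', p'', by rw [heq]; rfl, ?_, h2⟩
      apply FreeMonoid.toList.injective
      simp [CQPath.colors, h1, ha, hc]

lemma fmaMul_supp_exists {K C : Type*} [Field K] (f g : FreeMonoid C → K)
    (c : FreeMonoid C) (h : fmaMul f g c ≠ 0) :
    ∃ a b, a * b = c ∧ f a ≠ 0 ∧ g b ≠ 0 := by
  by_contra hcon
  push_neg at hcon
  apply h
  unfold fmaMul
  apply finsum_eq_zero_of_forall_eq_zero
  rintro ⟨a, b⟩
  dsimp only
  split_ifs with hab
  · rcases eq_or_ne (f a) 0 with hfa | hfa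
    · simp [hfa]
    · simp [hcon a b hab hfa]
  · rfl

/-- every path in `P_v(supp (fg))` factors as `r'r''` with
`r'' ∈ P_v(supp g)` and `r' ∈ P_{s(r'')}(supp f)`; in particular, if `f` is admissible
and `P_v(supp g)` is finite, then `P_v(supp (fg))` is finite. -/
theorem pathsTo_mul_factorization (K : Type*) [Field K] (Γ : ColoredQuiver)
    (f g : FreeMonoid Γ.Cl → K) (hf : Admissible Γ f) (v : Γ.V) :
    (∀ p ∈ pathsTo Γ v (fmaSupp (fmaMul f g)),
      ∃ (w : Γ.V) (p' : CQPath Γ p.1 w) (p'' : CQPath Γ w v),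
        p.2 = p'.comp p'' ∧ p'.colors ∈ fmaSupp f ∧ p''.colors ∈ fmaSupp g) ∧
    ((pathsTo Γ v (fmaSupp g)).Finite → (pathsTo Γ v (fmaSupp (fmaMul f g))).Finite) := by
  have main : ∀ p ∈ pathsTo Γ v (fmaSupp (fmaMul f g)),
      ∃ (w : Γ.V) (p' : CQPath Γ p.1 w) (p'' : CQPath Γ w v),
        p.2 = p'.comp p'' ∧ p'.colors ∈ fmaSupp f ∧ p''.colors ∈ fmaSupp g := by
    rintro ⟨u, q⟩ hp
    obtain ⟨a, b, hab, hfa, hgb⟩ := fmaMul_supp_exists f g _ hp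
    obtain ⟨w, p', p'', heq, h1, h2⟩ := cq_split q a b hab.symm
    exact ⟨w, p', p'', heq, h1 ▸ hfa, h2 ▸ hgb⟩
  refine ⟨main, fun hg => ?_⟩
  have hfin : (⋃ q ∈ pathsTo Γ v (fmaSupp g),
      (fun r : Σ u, CQPath Γ u q.1 => (⟨r.1, r.2.comp q.2⟩ : Σ u, CQPath Γ u v)) ''
        (pathsTo Γ q.1 (fmaSupp f))).Finite := by
    apply Set.Finite.biUnion hg
    intro q _
    exact (hf q.1).image _
  apply hfin.subset
  rintro ⟨u, p⟩ hp
  obtain ⟨w, p', p'', heq, h1, h2⟩ := main ⟨u, p⟩ hp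
  refine Set.mem_biUnion (show (⟨w, p''⟩ : Σ w, CQPath Γ w v) ∈ pathsTo Γ v (fmaSupp g) from h2) ?_
  exact ⟨⟨u, p'⟩, h1, by simp [heq.symm]⟩
end

section
/- Let R be a commutative ring. An R-module H is monoform if for every nonzero submodule L of H, no nonzero submodule of H is isomorphic to a submodule of H/L. If p is a prime ideal of R, then R/p is a monoform R-module. -/
open scoped BigOperators Classical

/-- A module `H` is monoform if for every nonzero submodule `L` of `H`, no nonzero
submodule of `H` embeds into `H ⧸ L`. -/
def IsMonoform (R H : Type*) [Ring R] [AddCommGroup H] [Module R H] : Prop :=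
  ∀ L : Submodule R H, L ≠ ⊥ →
    ∀ N : Submodule R H, ∀ f : N →ₗ[R] H ⧸ L, Function.Injective f → N = ⊥

/-- for a prime ideal `p` of a commutative ring `R`, the module `R/p`
is monoform. -/
theorem quotient_prime_isMonoform (R : Type*) [CommRing R] (p : Ideal R)
    [p.IsPrime] : IsMonoform R (R ⧸ p) := by
  intro L hL N f hf
  -- pick a nonzero element of L
  obtain ⟨x, hxL, hx0⟩ := Submodule.exists_mem_ne_zero_of_ne_bot hL
  obtain ⟨a, rfl⟩ := Ideal.Quotient.mk_surjective x
  have ha : a ∉ p := fun h => hx0 (Ideal.Quotient.eq_zero_iff_mem.mpr h)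
  have hmul : ∀ c d : R, c • (Ideal.Quotient.mk p d : R ⧸ p) = Ideal.Quotient.mk p (c * d) := by
    intro c d
    rw [← Ideal.Quotient.mk_eq_mk, ← Ideal.Quotient.mk_eq_mk, ← Submodule.Quotient.mk_smul,
      smul_eq_mul]
  -- a annihilates (R⧸p)⧸L
  have hann : ∀ q : (R ⧸ p) ⧸ L, a • q = 0 := by
    intro q
    obtain ⟨y, rfl⟩ := Submodule.Quotient.mk_surjective L q
    rw [← Submodule.Quotient.mk_smul, Submodule.Quotient.mk_eq_zero]
    obtain ⟨b, rfl⟩ := Ideal.Quotient.mk_surjective y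
    rw [hmul, mul_comm, ← hmul]
    exact L.smul_mem b hxL
  ext n
  simp only [Submodule.mem_bot]
  constructor
  · intro hn
    have hsn : a • n ∈ N := N.smul_mem a hn
    have h1 : f (a • (⟨n, hn⟩ : N)) = 0 := by
      rw [map_smul]; exact hann _
    have h2 : a • (⟨n, hn⟩ : N) = 0 := hf (by rw [h1, map_zero])
    have h3 : a • n = 0 := congrArg Subtype.val h2
    obtain ⟨b, rfl⟩ := Ideal.Quotient.mk_surjective n
    have : a * b ∈ p := by
      rw [← Ideal.Quotient.eq_zero_iff_mem]
      rw [hmul] at h3; exact h3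
    rcases Ideal.IsPrime.mem_or_mem ‹p.IsPrime› this with h | h
    · exact absurd h ha
    · exact Ideal.Quotient.eq_zero_iff_mem.mpr h
  · rintro rfl; exact N.zero_mem
end

section
/- In the category of modules over a ring, every compressible noetherian module is monoform. -/
open scoped BigOperators Classical

/-- A module `M` is compressible if every nonzero submodule of `M` contains a
submodule isomorphic to `M`. -/
def IsCompressible (R M : Type*) [Ring R] [AddCommGroup M] [Module R M] : Prop :=
  ∀ N : Submodule R M, N ≠ ⊥ →
    ∃ f : M →ₗ[R] M, Function.Injective f ∧ LinearMap.range f ≤ N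

/-- every compressible noetherian module is monoform. -/
theorem compressible_noetherian_isMonoform (R M : Type*) [Ring R] [AddCommGroup M]
    [Module R M] [IsNoetherian R M] (hc : IsCompressible R M) : IsMonoform R M := by
  intro L hL N f hf
  by_contra hN
  -- get an injective map `α : M →ₗ[R] M ⧸ L`
  obtain ⟨g, hg, hgr⟩ := hc N hN
  set α : M →ₗ[R] M ⧸ L :=
    f.comp (g.codRestrict N (fun c => hgr ⟨c, rfl⟩)) with hα
  have hαinj : Function.Injective α := by
    apply hf.comp
    intro x y hxy
    exact hg (congrArg Subtype.val hxy)
  -- build a strictly increasing chain of submodules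
  let T : ℕ → Submodule R M := fun n => Nat.rec L
    (fun _ Tn => Submodule.comap L.mkQ (Submodule.map α Tn)) n
  have hT0 : T 0 = L := rfl
  have hTs : ∀ n, T (n + 1) = Submodule.comap L.mkQ (Submodule.map α (T n)) :=
    fun n => rfl
  have hmkQ : Function.Surjective L.mkQ := Submodule.mkQ_surjective L
  have hcomap_lt : ∀ {A B : Submodule R (M ⧸ L)}, A < B →
      Submodule.comap L.mkQ A < Submodule.comap L.mkQ B := by
    intro A B hAB
    refine lt_of_le_of_ne (Submodule.comap_mono hAB.le) ?_
    intro h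
    exact hAB.ne (Submodule.comap_injective_of_surjective hmkQ h)
  have hmap_lt : ∀ {A B : Submodule R M}, A < B →
      Submodule.map α A < Submodule.map α B := by
    intro A B hAB
    refine lt_of_le_of_ne (Submodule.map_mono hAB.le) ?_
    intro h
    exact hAB.ne (Submodule.map_injective_of_injective hαinj h)
  have hstep : ∀ n, T n < T (n + 1) := by
    intro n
    induction n with
    | zero =>
      rw [hT0, hTs, hT0]
      have h1 : (⊥ : Submodule R (M ⧸ L)) < Submodule.map α L := by
        rw [bot_lt_iff_ne_bot]
        intro h
        apply hL
        apply Submodule.map_injective_of_injective hαinj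
        rw [h, Submodule.map_bot]
      have := hcomap_lt h1
      rwa [Submodule.comap_bot, Submodule.ker_mkQ] at this
    | succ n ih =>
      rw [hTs n, hTs (n + 1)]
      exact hcomap_lt (hmap_lt ih)
  -- contradiction with noetherianity
  have hmono : Monotone T := monotone_nat_of_le_succ (fun n => (hstep n).le)
  obtain ⟨n, hn⟩ := monotone_stabilizes_iff_noetherian.mpr ‹IsNoetherian R M›
    ⟨T, hmono⟩
  exact (hstep n).ne (hn (n + 1) (Nat.le_succ n))
end

section
/- Let Γ be a colored quiver and Γ̃ its extension as in the main construction, with vertex set ℕ × Γ₀ and additional arrows r^i_{v,w} : (i,v) → (i+1,w) of pairwise distinct new colors c_{v,w}. The map sending ∑_{j,v} λ_{(j,v)} x_{(j,v)} to ∑_{j,v} λ_{(j,v)} x_{(j+i,v)} is an isomorphism of right F_{Γ̃}-modules from M_{Γ̃} onto the submodule M_{≥i} = {y ∈ M_{Γ̃} : supp y ⊆ ⋃_{j≥i} ({j} × Γ₀)}. -/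
open scoped BigOperators Classical

/-- The action of `f ∈ K⟨⟨C⟩⟩` on `y ∈ M_Γ = ∏_v K x_v`:
`(y·f)(t(r)) = ∑_r λ_{u(r)} μ_{s(r)}`, the sum running over paths `r`
(well defined when `f` is admissible). -/
noncomputable def cqAct {K : Type*} [Field K] {Γ : ColoredQuiver} (y : Γ.V → K)
    (f : FreeMonoid Γ.Cl → K) : Γ.V → K :=
  fun w => ∑ᶠ p : Σ a : Γ.V, CQPath Γ a w, f p.2.colors * y p.1

/-- The extended colored quiver `Γ̃` of `Γ`: vertices `ℕ × Γ₀`, a copy of the arrows of `Γ`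
on each level, and new arrows `r^i_{v,w} : (i,v) → (i+1,w)` with fresh pairwise distinct
colors `c_{v,w}`. -/
def extQuiver (Γ : ColoredQuiver) : ColoredQuiver where
  V := ℕ × Γ.V
  A := (ℕ × Γ.A) ⊕ (ℕ × Γ.V × Γ.V)
  Cl := Γ.Cl ⊕ (Γ.V × Γ.V)
  s := fun a => match a with
    | .inl (i, r) => (i, Γ.s r)
    | .inr (i, v, _) => (i, v)
  t := fun a => match a with
    | .inl (i, r) => (i, Γ.t r)
    | .inr (i, _, w) => (i + 1, w)
  u := fun a => match a with
    | .inl (_, r) => .inl (Γ.u r)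
    | .inr (_, v, w) => .inr (v, w)

/-- The shift map `M_{Γ̃} → M_{Γ̃}`, sending `∑ λ_{(j,v)} x_{(j,v)}` to
`∑ λ_{(j,v)} x_{(j+i,v)}`. -/
noncomputable def shiftMap {K : Type*} [Field K] (Γ : ColoredQuiver) (i : ℕ)
    (y : (extQuiver Γ).V → K) : (extQuiver Γ).V → K :=
  fun p => if i ≤ p.1 then y (p.1 - i, p.2) else 0


namespace ShiftAux

variable {Γ : ColoredQuiver}

/-- shift on vertices of the extended quiver -/
def vsh (Γ : ColoredQuiver) (i : ℕ) (p : (extQuiver Γ).V) : (extQuiver Γ).V := (i + p.1, p.2)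

lemma vsh_inj (i : ℕ) : Function.Injective (vsh Γ i) := by
  intro a b h
  obtain ⟨h1, h2⟩ := Prod.ext_iff.mp h
  exact Prod.ext_iff.mpr ⟨Nat.add_left_cancel h1, h2⟩

/-- shift on arrows of the extended quiver -/
def ash (Γ : ColoredQuiver) (i : ℕ) : (extQuiver Γ).A → (extQuiver Γ).A
  | .inl (j, r) => .inl (i + j, r)
  | .inr (j, v, w) => .inr (i + j, v, w)

lemma ash_inj (i : ℕ) : Function.Injective (ash Γ i) := by
  rintro (⟨j, r⟩ | ⟨j, v, w⟩) (⟨j', r'⟩ | ⟨j', v', w'⟩) h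
  · injection h with h'
    injection h' with h1 h2
    exact congrArg Sum.inl (Prod.ext_iff.mpr ⟨Nat.add_left_cancel h1, h2⟩)
  · simp [ash] at h
  · simp [ash] at h
  · injection h with h'
    injection h' with h1 h2
    exact congrArg Sum.inr (Prod.ext_iff.mpr ⟨Nat.add_left_cancel h1, h2⟩)

/-- shift on paths of the extended quiver -/
def psh (Γ : ColoredQuiver) (i : ℕ) :
    ∀ {a w : (extQuiver Γ).V}, CQPath (extQuiver Γ) a w →
      CQPath (extQuiver Γ) (vsh Γ i a) (vsh Γ i w)
  | _, _, .nil v => .nil (vsh Γ i v)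
  | _, _, .cons (Sum.inl (j, r0)) p =>
      CQPath.cons (Γ := extQuiver Γ) (Sum.inl (i + j, r0)) (psh Γ i p)
  | _, _, .cons (Sum.inr (j, v0, w0)) p =>
      CQPath.cons (Γ := extQuiver Γ) (Sum.inr (i + j, v0, w0)) (psh Γ i p)

lemma psh_colors (i : ℕ) : ∀ {a w : (extQuiver Γ).V} (p : CQPath (extQuiver Γ) a w),
    (psh Γ i p).colors = p.colors := by
  intro a w p
  induction p with
  | nil v => simp [psh, CQPath.colors]
  | cons r p ih =>
    match r with
    | Sum.inl (j, r0) => exact congrArg (FreeMonoid.of _ * ·) ih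
    | Sum.inr (j, v0, w0) => exact congrArg (FreeMonoid.of _ * ·) ih

lemma level_mono : ∀ {a w : (extQuiver Γ).V} (_ : CQPath (extQuiver Γ) a w),
    a.1 ≤ w.1 := by
  intro a w p
  induction p with
  | nil v => exact le_refl _
  | cons r p ih =>
    refine le_trans ?_ ih
    match r with
    | Sum.inl (j, r0) => exact le_refl _
    | Sum.inr (j, v0, w0) => exact Nat.le_succ _

/-- list of arrows of a path -/
def arrowsOf {Δ : ColoredQuiver} : ∀ {a w : Δ.V}, CQPath Δ a w → List Δ.A
  | _, _, .nil _ => []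
  | _, _, .cons r p => r :: arrowsOf p

lemma arrows_inv {Δ : ColoredQuiver} : ∀ {a w : Δ.V} (q : CQPath Δ a w) (r : Δ.A)
    (l : List Δ.A), arrowsOf q = r :: l →
    ∃ p₀ : CQPath Δ (Δ.t r) w, arrowsOf p₀ = l ∧
      (⟨a, q⟩ : Σ u : Δ.V, CQPath Δ u w) = ⟨Δ.s r, CQPath.cons r p₀⟩ := by
  intro a w q r l h
  cases q with
  | nil v => simp [arrowsOf] at h
  | cons r'' q₀ =>
    simp only [arrowsOf, List.cons.injEq] at h
    obtain ⟨rfl, hl⟩ := h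
    exact ⟨q₀, hl, rfl⟩

lemma eq_of_arrows {Δ : ColoredQuiver} : ∀ {a w : Δ.V} (p q : CQPath Δ a w),
    arrowsOf p = arrowsOf q → p = q := by
  intro a w p
  induction p with
  | nil v =>
    intro q h
    cases q with
    | nil => rfl
    | cons r q₀ => simp [arrowsOf] at h
  | cons r p₀ ih =>
    intro q h
    simp only [arrowsOf] at h
    obtain ⟨q₀, hl, hq⟩ := arrows_inv q r (arrowsOf p₀) h.symm
    injection hq with h1 h2
    subst h2
    rw [ih q₀ hl.symm]

lemma arrows_psh (i : ℕ) : ∀ {a w : (extQuiver Γ).V} (p : CQPath (extQuiver Γ) a w),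
    arrowsOf (psh Γ i p) = (arrowsOf p).map (ash Γ i) := by
  intro a w p
  induction p with
  | nil v => simp [psh, arrowsOf]
  | cons r p ih =>
    match r with
    | Sum.inl (j, r0) => exact congrArg (List.cons _) ih
    | Sum.inr (j, v0, w0) => exact congrArg (List.cons _) ih

/-- The sigma-level shift on paths into a fixed vertex. -/
def pshS (Γ : ColoredQuiver) (i m : ℕ) (v : Γ.V)
    (q : Σ a : (extQuiver Γ).V, CQPath (extQuiver Γ) a (m, v)) :
    Σ a : (extQuiver Γ).V, CQPath (extQuiver Γ) a (i + m, v) :=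
  ⟨vsh Γ i q.1, psh Γ i q.2⟩

lemma pshS_inj (i m : ℕ) (v : Γ.V) : Function.Injective (pshS Γ i m v) := by
  rintro ⟨a, p⟩ ⟨b, q⟩ h
  simp only [pshS] at h
  injection h with h1 h2
  obtain rfl : a = b := vsh_inj i h1
  have h3 := eq_of_heq h2
  have h4 : arrowsOf (psh Γ i p) = arrowsOf (psh Γ i q) := by rw [h3]
  replace h4 : (arrowsOf p).map (ash Γ i) = (arrowsOf q).map (ash Γ i) :=
    (arrows_psh i p).symm.trans (h4.trans (arrows_psh i q))
  have h5 : arrowsOf p = arrowsOf q := List.map_injective_iff.mpr (ash_inj i) h4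
  obtain rfl := eq_of_arrows p q h5
  rfl

lemma psh_surj (i : ℕ) : ∀ {a w : (extQuiver Γ).V} (p : CQPath (extQuiver Γ) a w),
    i ≤ a.1 → ∃ (a' w' : (extQuiver Γ).V) (p' : CQPath (extQuiver Γ) a' w'),
      (⟨a, w, p⟩ : Σ a w : (extQuiver Γ).V, CQPath (extQuiver Γ) a w) =
        ⟨vsh Γ i a', vsh Γ i w', psh Γ i p'⟩ := by
  intro a w p
  induction p with
  | nil v =>
    intro h
    obtain ⟨v1, v2⟩ := v
    refine ⟨(v1 - i, v2), (v1 - i, v2), .nil _, ?_⟩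
    have h' : i + (v1 - i) = v1 := Nat.add_sub_cancel' h
    simp only [psh, vsh]
    rw [h']
  | cons r p ih =>
    rcases r with ⟨j, r0⟩ | ⟨j, v0, w0⟩
    · intro h
      have hj : i ≤ j := h
      obtain ⟨a', w', p', hp⟩ := ih hj
      obtain ⟨a1, a2⟩ := a'
      have h1 : ((extQuiver Γ).t (Sum.inl (j, r0))) = vsh Γ i (a1, a2) :=
        congrArg Sigma.fst hp
      obtain ⟨hj1, hv2⟩ : j = i + a1 ∧ Γ.t r0 = a2 := Prod.ext_iff.mp h1
      subst hv2
      subst hj1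
      injection hp with h1' h2
      injection h2 with h3 h4
      subst h3
      subst h4
      exact ⟨(a1, Γ.s r0), w', CQPath.cons (Γ := extQuiver Γ) (Sum.inl (a1, r0)) p',
        by simp [psh, vsh, extQuiver]⟩
    · intro h
      have hj : i ≤ j := h
      obtain ⟨a', w', p', hp⟩ := ih (le_trans hj (Nat.le_succ j))
      obtain ⟨a1, a2⟩ := a'
      have h1 : ((extQuiver Γ).t (Sum.inr (j, v0, w0))) = vsh Γ i (a1, a2) :=
        congrArg Sigma.fst hp
      obtain ⟨hj1, hv2⟩ : j + 1 = i + a1 ∧ w0 = a2 := Prod.ext_iff.mp h1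
      subst hv2
      obtain ⟨b, rfl⟩ : ∃ b, a1 = b + 1 := ⟨a1 - 1, by omega⟩
      obtain rfl : j = i + b := by omega
      injection hp with h1' h2
      injection h2 with h3 h4
      subst h3
      subst h4
      exact ⟨(b, v0), w', CQPath.cons (Γ := extQuiver Γ) (Sum.inr (b, v0, w0)) p',
        by simp [psh, vsh, extQuiver]⟩

lemma mem_range_pshS (i m : ℕ) (v : Γ.V)
    (q : Σ a : (extQuiver Γ).V, CQPath (extQuiver Γ) a (i + m, v))
    (hq : i ≤ q.1.1) : q ∈ Set.range (pshS Γ i m v) := by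
  obtain ⟨a, p⟩ := q
  obtain ⟨a', w', p', hp⟩ := psh_surj i p hq
  have h1 : ((i + m, v) : (extQuiver Γ).V) = vsh Γ i w' :=
    congrArg (fun t => t.2.1) hp
  obtain ⟨w1, w2⟩ := w'
  obtain ⟨hm, hv⟩ : i + m = i + w1 ∧ v = w2 := Prod.ext_iff.mp h1
  obtain rfl : m = w1 := by omega
  subst hv
  refine ⟨⟨a', p'⟩, ?_⟩
  injection hp with g1 g2
  subst g1
  injection g2 with g3 g4
  subst g4
  rfl

end ShiftAux

/-- the shift map is an isomorphism of right `F_{Γ̃}`-modules from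
`M_{Γ̃}` onto the submodule `M_{≥ i}` of elements supported in levels `≥ i`. -/
theorem shiftMap_iso (K : Type*) [Field K] (Γ : ColoredQuiver) (i : ℕ) :
    Function.Injective (shiftMap (K := K) Γ i) ∧
    (Set.range (shiftMap (K := K) Γ i) =
      {y : (extQuiver Γ).V → K | ∀ p : ℕ × Γ.V, y p ≠ 0 → i ≤ p.1}) ∧
    (∀ y z : (extQuiver Γ).V → K,
      shiftMap Γ i (y + z) = shiftMap Γ i y + shiftMap Γ i z) ∧
    (∀ (a : K) (y : (extQuiver Γ).V → K),
      shiftMap Γ i (a • y) = a • shiftMap Γ i y) ∧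
    (∀ (y : (extQuiver Γ).V → K) (f : FreeMonoid (extQuiver Γ).Cl → K),
      Admissible (extQuiver Γ) f →
        shiftMap Γ i (cqAct y f) = cqAct (shiftMap Γ i y) f) := by
  refine ⟨?_, ?_, ?_, ?_, ?_⟩
  · -- injectivity
    intro y z h
    funext p
    have h1 := congrFun h (i + p.1, p.2)
    simp only [shiftMap] at h1
    rw [if_pos (Nat.le_add_right i p.1), if_pos (Nat.le_add_right i p.1),
      Nat.add_sub_cancel_left] at h1
    exact h1
  · -- range
    ext y
    constructor
    · rintro ⟨z, rfl⟩ p hp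
      by_contra hi
      simp [shiftMap, hi] at hp
    · intro hy
      refine ⟨fun p => y (i + p.1, p.2), funext fun p => ?_⟩
      simp only [shiftMap]
      split
      · next hle =>
          rw [Nat.add_sub_cancel' hle]
          rfl
      · next hle =>
          by_contra h0
          exact hle (hy p fun h' => h0 h'.symm)
  · -- additive
    intro y z
    funext p
    simp only [shiftMap, Pi.add_apply]
    split
    · rfl
    · simp
  · -- smul
    intro a y
    funext p
    simp only [shiftMap, Pi.smul_apply, smul_eq_mul]
    split
    · rfl
    · simp
  · -- compatibility with the module action
    intro y f _hf
    funext p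
    obtain ⟨j, v⟩ := p
    by_cases hij : i ≤ j
    · obtain ⟨m, rfl⟩ := Nat.exists_eq_add_of_le hij
      have hL : shiftMap Γ i (cqAct y f) (i + m, v) = cqAct y f (m, v) := by
        simp only [shiftMap]
        rw [if_pos (Nat.le_add_right i m), Nat.add_sub_cancel_left]
      rw [hL]
      show cqAct y f (m, v) = cqAct (shiftMap Γ i y) f (i + m, v)
      unfold cqAct
      have key : ∀ q : Σ a : (extQuiver Γ).V, CQPath (extQuiver Γ) a (m, v),
          f q.2.colors * y q.1 =
            f (ShiftAux.pshS Γ i m v q).2.colors *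
              shiftMap Γ i y (ShiftAux.pshS Γ i m v q).1 := by
        rintro ⟨a, q⟩
        simp only [ShiftAux.pshS, ShiftAux.psh_colors, shiftMap, ShiftAux.vsh]
        simp only [if_pos (Nat.le_add_right i a.1), Nat.add_sub_cancel_left]
        exact congrArg (fun c => f c * y a) (ShiftAux.psh_colors i q).symm
      calc (∑ᶠ q : Σ a : (extQuiver Γ).V, CQPath (extQuiver Γ) a (m, v),
              f q.2.colors * y q.1)
          = ∑ᶠ q : Σ a : (extQuiver Γ).V, CQPath (extQuiver Γ) a (m, v),
              f (ShiftAux.pshS Γ i m v q).2.colors *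
                shiftMap Γ i y (ShiftAux.pshS Γ i m v q).1 := finsum_congr key
        _ = ∑ᶠ q ∈ Set.range (ShiftAux.pshS Γ i m v),
              f q.2.colors * shiftMap Γ i y q.1 :=
            (finsum_mem_range (f := fun q => f q.2.colors * shiftMap Γ i y q.1)
              (ShiftAux.pshS_inj i m v)).symm
        _ = ∑ᶠ q ∈ (Set.univ : Set (Σ a : (extQuiver Γ).V,
              CQPath (extQuiver Γ) a (i + m, v))),
              f q.2.colors * shiftMap Γ i y q.1 := by
            refine finsum_mem_inter_support_eq' _ _ _ fun x hx => ?_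
            simp only [Set.mem_univ, iff_true]
            refine ShiftAux.mem_range_pshS i m v x ?_
            by_contra hc
            apply hx
            simp [shiftMap, hc]
        _ = ∑ᶠ q : Σ a : (extQuiver Γ).V, CQPath (extQuiver Γ) a (i + m, v),
              f q.2.colors * shiftMap Γ i y q.1 := finsum_mem_univ _
    · have hL : shiftMap Γ i (cqAct y f) (j, v) = 0 := by simp [shiftMap, hij]
      rw [hL]
      refine (finsum_eq_zero_of_forall_eq_zero ?_).symm
      rintro ⟨a, q⟩
      have ha : ¬ i ≤ a.1 := fun hc => hij (le_trans hc (ShiftAux.level_mono q))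
      simp [shiftMap, ha]
end

section
/- With Γ̃ as in the main construction, let y ∈ M_{Γ̃} with (supp y) ∩ ({i} × Γ₀) ≠ ∅ and supp y ⊆ ⋃_{j≥i}({j} × Γ₀). Then the cyclic submodule y·F_{Γ̃} contains M_{≥i+1} = {z ∈ M_{Γ̃} : supp z ⊆ ⋃_{j≥i+1}({j} × Γ₀)}. -/
open scoped BigOperators Classical

section Aux

def castT {Γ : ColoredQuiver} {a b b' : Γ.V} (h : b = b') (p : CQPath Γ a b) :
    CQPath Γ a b' := h ▸ p

lemma colors_castT {Γ : ColoredQuiver} {a b b' : Γ.V} (h : b = b') (p : CQPath Γ a b) :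
    (castT h p).colors = p.colors := by subst h; rfl

lemma heq_castT {Γ : ColoredQuiver} {a b b' : Γ.V} (h : b = b') (p : CQPath Γ a b) :
    HEq (castT h p) p := by subst h; rfl

lemma castT_cons {Γ : ColoredQuiver} {b b' : Γ.V} (h : b = b') (r : Γ.A)
    (p : CQPath Γ (Γ.t r) b) :
    castT h (CQPath.cons r p) = CQPath.cons r (castT h p) := by subst h; rfl

/-- The word `c_{u,u}^d c_{u,v}`. -/
def Wrd {Γ : ColoredQuiver} (u v : Γ.V) (d : ℕ) : FreeMonoid ((extQuiver Γ).Cl) :=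
  FreeMonoid.ofList (List.replicate d (Sum.inr (u, u)) ++ [Sum.inr (u, v)])

lemma Wrd_inj {Γ : ColoredQuiver} {u v v' : Γ.V} {d d' : ℕ}
    (h : Wrd u v d = Wrd u v' d') : d = d' ∧ v = v' := by
  have h' : List.replicate d (Sum.inr (u, u) : (extQuiver Γ).Cl) ++ [Sum.inr (u, v)]
      = List.replicate d' (Sum.inr (u, u)) ++ [Sum.inr (u, v')] :=
    congrArg FreeMonoid.toList h
  have hlen : d = d' := by
    have := congrArg List.length h'
    simpa using this
  subst hlen
  have := (List.append_inj h' (by simp)).2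
  simp at this
  exact ⟨rfl, this⟩

/-- The ladder path `(j,u) → (j+1,u) → ⋯ → (j+d,u) → (j+d+1,v)`. -/
def ladder {Γ : ColoredQuiver} (u v : Γ.V) : (d j : ℕ) → CQPath (extQuiver Γ) (j, u) (j + d + 1, v)
  | 0, j => CQPath.cons (Γ := extQuiver Γ) (Sum.inr (j, u, v)) (.nil _)
  | d + 1, j => CQPath.cons (Γ := extQuiver Γ) (Sum.inr (j, u, u))
      (castT (congrArg (fun n => (n, v)) (by omega : (j + 1) + d + 1 = j + (d + 1) + 1))
        (ladder u v d (j + 1)))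

lemma colors_ladder {Γ : ColoredQuiver} (u v : Γ.V) :
    ∀ (d j : ℕ), (ladder u v d j).colors = Wrd u v d
  | 0, j => by
    simp only [ladder, CQPath.colors]
    rfl
  | d + 1, j => by
    simp only [ladder, CQPath.colors, colors_castT, colors_ladder u v d (j+1)]
    exact (congrArg (FreeMonoid.of ((extQuiver Γ).u (Sum.inr (j, u, u))) * ·)
      ((colors_castT _ _).trans (colors_ladder u v d (j+1))))

lemma nil_of_colors {Γ : ColoredQuiver} {a b : Γ.V} (p : CQPath Γ a b)
    (h : p.colors = 1) : b = a ∧ HEq p (CQPath.nil a) := by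
  cases p with
  | nil => exact ⟨rfl, HEq.rfl⟩
  | cons r q =>
    exfalso
    have := congrArg FreeMonoid.toList h
    simp [CQPath.colors] at this

end Aux

lemma heq_cons_castT {Γ : ColoredQuiver} {b b' : Γ.V} (h : b = b') (r : Γ.A)
    (p : CQPath Γ (Γ.t r) b) :
    HEq (CQPath.cons r (castT h p)) (CQPath.cons r p) := by subst h; rfl

lemma classify {Γ : ColoredQuiver} (u : Γ.V) :
    ∀ {a b : (extQuiver Γ).V} (p : CQPath (extQuiver Γ) a b) (d : ℕ) (v' : Γ.V),
      p.colors = Wrd u v' d →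
      a.2 = u ∧ b = (a.1 + d + 1, v') ∧ HEq p (ladder u v' d a.1) := by
  intro a b p
  induction p with
  | nil c =>
    intro d v' h
    exfalso
    have := congrArg FreeMonoid.toList h
    simp [CQPath.colors, Wrd] at this
    exact List.cons_ne_nil _ _ (List.append_eq_nil_iff.mp this).2
  | cons r q ih =>
    intro d v' h
    have h' : (extQuiver Γ).u r :: FreeMonoid.toList q.colors
        = List.replicate d (Sum.inr (u, u)) ++ [Sum.inr (u, v')] := congrArg FreeMonoid.toList h
    match d, r with
    | 0, Sum.inl (j, r0) => simp [extQuiver] at h'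
    | d + 1, Sum.inl (j, r0) =>
      exfalso
      rw [List.replicate_succ] at h'
      simp [extQuiver] at h'
    | 0, Sum.inr (j, v1, v2) =>
      simp only [List.replicate_zero, List.nil_append, List.cons.injEq] at h'
      have hu : (extQuiver Γ).u (Sum.inr (j, v1, v2)) = Sum.inr (v1, v2) := rfl
      rw [hu] at h'
      obtain ⟨hv, hnil⟩ := List.cons.inj h'
      have hv12 : v1 = u ∧ v2 = v' := by
        have := Sum.inr.inj hv
        exact ⟨congrArg Prod.fst this, congrArg Prod.snd this⟩
      obtain ⟨hv1, hv2⟩ := hv12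
      subst v1; subst v2
      have hq : q.colors = 1 := by
        apply FreeMonoid.toList.injective
        exact hnil
      obtain ⟨hb, hq'⟩ := nil_of_colors q hq
      subst hb
      refine ⟨rfl, rfl, ?_⟩
      have hq'' : q = CQPath.nil _ := eq_of_heq hq'
      subst hq''
      exact HEq.rfl
    | d + 1, Sum.inr (j, v1, v2) =>
      rw [List.replicate_succ] at h'
      replace h' := List.cons.inj h'
      have hu : (extQuiver Γ).u (Sum.inr (j, v1, v2)) = Sum.inr (v1, v2) := rfl
      rw [hu] at h'
      obtain ⟨hv, htail⟩ := h'
      have hv12 : v1 = u ∧ v2 = u := by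
        have := Sum.inr.inj hv
        exact ⟨congrArg Prod.fst this, congrArg Prod.snd this⟩
      obtain ⟨hv1, hv2⟩ := hv12
      subst v1; subst v2
      have hq : q.colors = Wrd u v' d := FreeMonoid.toList.injective htail
      obtain ⟨_, hb, hq'⟩ := ih d v' hq
      subst hb
      refine ⟨rfl, ?_, ?_⟩
      · show _ = ((j : ℕ) + (d + 1) + 1, v')
        congr 1
        show (j + 1) + d + 1 = j + (d + 1) + 1
        omega
      · have hq'' : q = ladder u v' d (j + 1) := eq_of_heq hq'
        subst hq''
        simp only [ladder]
        exact (heq_cons_castT _ _ _).symm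

noncomputable def acoef {K : Type*} [Field K] {Γ : ColoredQuiver} (i : ℕ) (u : Γ.V)
    (y z : ℕ × Γ.V → K) : ℕ → Γ.V → K
  | n, v => (z (i + 1 + n, v) -
      ∑ d ∈ (Finset.range n).attach, acoef i u y z d.1 v * y (i + n - d.1, u)) / y (i, u)
  termination_by n _ => n
  decreasing_by exact Finset.mem_range.mp d.2

lemma acoef_spec {K : Type*} [Field K] {Γ : ColoredQuiver} (i : ℕ) (u : Γ.V)
    (y z : ℕ × Γ.V → K) (hl : y (i, u) ≠ 0) (n : ℕ) (v : Γ.V) :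
    acoef i u y z n v * y (i, u) +
      ∑ d ∈ Finset.range n, acoef i u y z d v * y (i + n - d, u) = z (i + 1 + n, v) := by
  rw [acoef, div_mul_cancel₀ _ hl, Finset.sum_attach (Finset.range n)
    (fun d => acoef i u y z d v * y (i + n - d, u))]
  ring

def ladderTo {Γ : ColoredQuiver} (u v : Γ.V) (d m : ℕ) (h : d + 1 ≤ m) :
    CQPath (extQuiver Γ) (m - (d + 1), u) (m, v) :=
  castT (congrArg (fun n => (n, v)) (by omega : (m - (d + 1)) + d + 1 = m))
    (ladder u v d (m - (d + 1)))

lemma colors_ladderTo {Γ : ColoredQuiver} (u v : Γ.V) (d m : ℕ) (h : d + 1 ≤ m) :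
    (ladderTo u v d m h).colors = Wrd u v d := by
  exact (colors_castT _ _).trans (colors_ladder u v d _)

noncomputable def gpath {Γ : ColoredQuiver} (u : Γ.V) (m : ℕ) (v : Γ.V) (d : ℕ) :
    Σ a : (extQuiver Γ).V, CQPath (extQuiver Γ) a (m, v) :=
  if h : d + 1 ≤ m then ⟨(m - (d + 1), u), ladderTo u v d m h⟩ else ⟨(m, v), CQPath.nil _⟩

lemma gpath_eq {Γ : ColoredQuiver} (u : Γ.V) {m : ℕ} {v : Γ.V} {d : ℕ} (h : d + 1 ≤ m) :
    gpath u m v d = ⟨(m - (d + 1), u), ladderTo u v d m h⟩ := dif_pos h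

lemma eq_gpath {Γ : ColoredQuiver} (u : Γ.V) {m : ℕ} {v : Γ.V}
    (p : Σ a : (extQuiver Γ).V, CQPath (extQuiver Γ) a (m, v)) (d : ℕ) (v' : Γ.V)
    (h : p.2.colors = Wrd u v' d) :
    v' = v ∧ d + 1 ≤ m ∧ p = gpath u m v d := by
  obtain ⟨ha2, hb, hp⟩ := classify u p.2 d v' h
  have hm : m = p.1.1 + d + 1 := congrArg Prod.fst hb
  have hv : v = v' := congrArg Prod.snd hb
  subst hv
  have hdm : d + 1 ≤ m := by omega
  refine ⟨rfl, hdm, ?_⟩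
  rw [gpath_eq u hdm]
  have h1 : p.1 = (m - (d + 1), u) := by
    have : p.1 = (p.1.1, p.1.2) := rfl
    rw [this, ha2]
    congr 1
    omega
  refine Sigma.ext h1 ?_
  refine HEq.trans hp ?_
  rw [ladderTo]
  refine HEq.trans ?_ (heq_castT (Γ := extQuiver Γ) (a := (m - (d + 1), u)) _ (ladder u v d (m - (d + 1)))).symm
  have : p.1.1 = m - (d + 1) := by omega
  rw [this]

noncomputable def fElt {K : Type*} [Field K] {Γ : ColoredQuiver} (i : ℕ) (u : Γ.V)
    (y z : ℕ × Γ.V → K) (w : FreeMonoid ((extQuiver Γ).Cl)) : K :=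
  if h : ∃ dv : ℕ × Γ.V, w = Wrd u dv.2 dv.1 then acoef i u y z h.choose.1 h.choose.2 else 0

lemma fElt_W {K : Type*} [Field K] {Γ : ColoredQuiver} (i : ℕ) (u : Γ.V)
    (y z : ℕ × Γ.V → K) (v : Γ.V) (d : ℕ) :
    fElt i u y z (Wrd u v d) = acoef i u y z d v := by
  have h : ∃ dv : ℕ × Γ.V, Wrd u v d = Wrd u dv.2 dv.1 := ⟨(d, v), rfl⟩
  rw [fElt, dif_pos h]
  obtain ⟨hd, hv⟩ := Wrd_inj h.choose_spec
  rw [← hd, ← hv]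

lemma fElt_ne_zero {K : Type*} [Field K] {Γ : ColoredQuiver} (i : ℕ) (u : Γ.V)
    (y z : ℕ × Γ.V → K) (w : FreeMonoid ((extQuiver Γ).Cl)) (h : fElt i u y z w ≠ 0) :
    ∃ d v, w = Wrd u v d := by
  by_contra hc
  push_neg at hc
  have : ¬ ∃ dv : ℕ × Γ.V, w = Wrd u dv.2 dv.1 := by
    rintro ⟨dv, hdv⟩
    exact hc dv.1 dv.2 hdv
  rw [fElt, dif_neg this] at h
  exact h rfl


/-- if `y ∈ M_{Γ̃}` is supported in levels `≥ i` and its support meets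
level `i`, then the cyclic submodule `y·F_{Γ̃}` contains `M_{≥ i+1}`. -/
theorem cyclic_contains_tail (K : Type*) [Field K] (Γ : ColoredQuiver) (i : ℕ)
    (y : (extQuiver Γ).V → K)
    (h1 : ∃ v : Γ.V, y (i, v) ≠ 0)
    (h2 : ∀ p : ℕ × Γ.V, y p ≠ 0 → i ≤ p.1) :
    ∀ z : (extQuiver Γ).V → K, (∀ p : ℕ × Γ.V, z p ≠ 0 → i + 1 ≤ p.1) →
      ∃ f : FreeMonoid (extQuiver Γ).Cl → K,
        Admissible (extQuiver Γ) f ∧ cqAct y f = z := by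
  obtain ⟨u, hu⟩ := h1
  intro z hz
  have key : ∀ (m : ℕ) (v : Γ.V)
      (p : Σ a : (extQuiver Γ).V, CQPath (extQuiver Γ) a ((m, v) : (extQuiver Γ).V)),
      fElt i u y z p.2.colors ≠ 0 →
      p ∈ ((Finset.range m).image (gpath u m v) : Finset _) := by
    intro m v p hp
    obtain ⟨d, v', hw⟩ := fElt_ne_zero i u y z _ hp
    obtain ⟨hv, hdm, hpe⟩ := eq_gpath u p d v' hw
    rw [Finset.mem_image]
    exact ⟨d, Finset.mem_range.mpr (by omega), hpe.symm⟩
  refine ⟨fElt i u y z, ?_, ?_⟩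
  · -- Admissible
    rintro ⟨m, v⟩
    apply Set.Finite.subset ((Finset.range m).image (gpath u m v)).finite_toSet
    intro p hp
    exact key m v p hp
  · -- cqAct y f = z
    funext b
    obtain ⟨m, v⟩ := b
    show (∑ᶠ p : Σ a : (extQuiver Γ).V, CQPath (extQuiver Γ) a (m, v),
        fElt i u y z p.2.colors * y p.1) = z (m, v)
    have hsum : (∑ᶠ p : Σ a : (extQuiver Γ).V, CQPath (extQuiver Γ) a (m, v),
        fElt i u y z p.2.colors * y p.1)
        = ∑ d ∈ Finset.range m, acoef i u y z d v * y (m - (d + 1), u) := by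
      rw [finsum_eq_sum_of_support_subset _
        (s := (Finset.range m).image (gpath u m v)) ?hsub]
      case hsub =>
        intro p hp
        have : fElt i u y z p.2.colors ≠ 0 := left_ne_zero_of_mul hp
        exact key m v p this
      rw [Finset.sum_image ?inj]
      case inj =>
        intro d hd d' hd' he
        have hdm : d + 1 ≤ m := Finset.mem_range.mp hd
        have hdm' : d' + 1 ≤ m := Finset.mem_range.mp hd'
        have h1 := congrArg Sigma.fst he
        rw [gpath_eq u hdm, gpath_eq u hdm'] at h1
        simp only at h1
        have : m - (d + 1) = m - (d' + 1) := congrArg Prod.fst h1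
        omega
      apply Finset.sum_congr rfl
      intro d hd
      have hdm : d + 1 ≤ m := Finset.mem_range.mp hd
      rw [gpath_eq u hdm]
      simp only
      rw [colors_ladderTo]
      exact congrArg (· * y (m - (d + 1), u)) (fElt_W i u y z v d)
    rw [hsum]
    rcases le_or_gt m i with hmi | him
    · -- low levels: both sides vanish
      have hzz : z (m, v) = 0 := by
        by_contra h
        have := hz (m, v) h
        simp only at this
        omega
      rw [hzz]
      apply Finset.sum_eq_zero
      intro d hd
      have hdm : d < m := Finset.mem_range.mp hd
      have hy : y (m - (d + 1), u) = 0 := by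
        by_contra h
        have := h2 _ h
        simp only at this
        omega
      rw [hy, mul_zero]
    · set n := m - i - 1 with hn
      have hmn : m = i + 1 + n := by omega
      have hsub2 : Finset.range (n + 1) ⊆ Finset.range m := by
        intro x hx
        rw [Finset.mem_range] at *
        omega
      rw [← Finset.sum_subset hsub2 ?vanish]
      case vanish =>
        intro d hdm hdn
        rw [Finset.mem_range] at hdm
        rw [Finset.mem_range] at hdn
        have hy : y (m - (d + 1), u) = 0 := by
          by_contra h
          have := h2 _ h
          simp only at this
          omega
        rw [hy, mul_zero]
      rw [Finset.sum_range_succ]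
      have hmn1 : m - (n + 1) = i := by omega
      rw [hmn1]
      have h3 : ∀ d ∈ Finset.range n,
          acoef i u y z d v * y (m - (d + 1), u)
            = acoef i u y z d v * y (i + n - d, u) := by
        intro d hd
        have : m - (d + 1) = i + n - d := by omega
        rw [this]
      rw [Finset.sum_congr rfl h3, add_comm, acoef_spec i u y z hu n v, hmn]
end

section
/- With Γ̃ as in the main construction, every nonzero F_{Γ̃}-submodule L of M_{Γ̃} decomposes as L = (L ∩ M_i) ⊕ M_{≥i+1}, where i is the smallest natural number such that some y ∈ L has (supp y) ∩ ({i} × Γ₀) ≠ ∅, M_i = {y : supp y ⊆ {i} × Γ₀}, and M_{≥i+1} = {y : supp y ⊆ ⋃_{j≥i+1}({j} × Γ₀)}. -/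
open scoped BigOperators Classical

namespace SubDecompAux


variable {Γ : ColoredQuiver}

lemma colors_nil (v : Γ.V) : (CQPath.nil (Γ := Γ) v).colors = 1 := rfl

lemma colors_cons (r : Γ.A) {w : Γ.V} (p : CQPath Γ (Γ.t r) w) :
    (CQPath.cons r p).colors = FreeMonoid.of (Γ.u r) * p.colors := rfl

lemma toList_colors_nil (v : Γ.V) : (CQPath.nil (Γ := Γ) v).colors.toList = [] := rfl

lemma toList_colors_cons (r : Γ.A) {w : Γ.V} (p : CQPath Γ (Γ.t r) w) :
    (CQPath.cons r p).colors.toList = Γ.u r :: p.colors.toList := rfl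

/-- the word `c_{v₀,w} c_{w,w}^k` -/
def levelWord (v₀ w : Γ.V) (k : ℕ) : List ((extQuiver Γ).Cl) :=
  Sum.inr (v₀, w) :: List.replicate k (Sum.inr (w, w))

lemma levelWord_inj {v₀ w w' : Γ.V} {k k' : ℕ}
    (h : levelWord v₀ w k = levelWord (Γ := Γ) v₀ w' k') : w = w' ∧ k = k' := by
  rw [levelWord, levelWord] at h; replace h := List.cons.inj h
  obtain ⟨h1, h2⟩ := h
  have hw : w = w' := by
    have := (Sum.inr.injEq _ _).mp h1
    exact (Prod.mk.injEq _ _ _ _).mp this |>.2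
  refine ⟨hw, ?_⟩
  have := congrArg List.length h2
  exact List.length_replicate.symm.trans (this.trans List.length_replicate)

lemma replicate_colors {w : Γ.V} {a b : (extQuiver Γ).V}
    (p : CQPath (extQuiver Γ) a b) :
    ∀ k : ℕ, p.colors.toList = List.replicate k (Sum.inr (w, w)) →
      b.1 = a.1 + k ∧ (k = 0 → b = a) ∧ (k ≠ 0 → a.2 = w ∧ b.2 = w) := by
  induction p with
  | nil v =>
    intro k h
    rw [toList_colors_nil] at h
    rcases k with _ | k
    · exact ⟨by omega, fun _ => rfl, fun h => absurd rfl h⟩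
    · rw [List.replicate_succ] at h; exact absurd h (by simp)
  | cons r p ih =>
    rename_i b
    intro k h
    rw [toList_colors_cons] at h
    rcases k with _ | k
    · simp at h
    · replace h := List.cons.inj (h.trans List.replicate_succ)
      obtain ⟨h1, h2⟩ := h
      rcases r with ⟨m, ar⟩ | ⟨m, v₁, v₂⟩
      · exact absurd h1 (by simp [extQuiver])
      · have hv1 : v₁ = w := by
          have : (Sum.inr (v₁, v₂) : Γ.Cl ⊕ (Γ.V × Γ.V)) = Sum.inr (w, w) := h1
          simpa using congrArg (fun x => (Sum.getRight? x).map Prod.fst) this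
        have hv2 : v₂ = w := by
          have : (Sum.inr (v₁, v₂) : Γ.Cl ⊕ (Γ.V × Γ.V)) = Sum.inr (w, w) := h1
          simpa using congrArg (fun x => (Sum.getRight? x).map Prod.snd) this
        obtain ⟨ih1, ih2, ih3⟩ := ih (k) h2
        have hb1 : b.1 = (m + 1) + k := ih1
        have hb2 : b.2 = w := by
          rcases Nat.eq_zero_or_pos k with hk | hk
          · have : b = ((m + 1 : ℕ), v₂) := ih2 hk
            rw [this]; exact hv2
          · exact (ih3 (by omega)).2
        refine ⟨?_, ?_, ?_⟩
        · show b.1 = m + (k + 1); omega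
        · intro h; exact absurd h (by omega)
        · intro _; exact ⟨hv1, hb2⟩

lemma exists_replicate_path (w : Γ.V) :
    ∀ (k j m : ℕ), m = j + k →
      ∃ p : CQPath (extQuiver Γ) ((j, w) : (extQuiver Γ).V) ((m, w) : (extQuiver Γ).V),
        p.colors.toList = List.replicate k (Sum.inr (w, w)) := by
  intro k
  induction k with
  | zero =>
    intro j m h
    have : m = j := by omega
    subst this
    exact ⟨.nil _, rfl⟩
  | succ k ih =>
    intro j m h
    obtain ⟨p, hp⟩ := ih (j + 1) m (by omega)
    refine ⟨@CQPath.cons (extQuiver Γ) (Sum.inr (j, w, w)) ((m, w)) p, ?_⟩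
    have hc := congrArg (List.cons ((extQuiver Γ).u (Sum.inr (j, w, w) : (extQuiver Γ).A))) hp
    exact (toList_colors_cons (Γ := extQuiver Γ) (Sum.inr (j, w, w)) p).trans hc

lemma exists_word_path (v₀ w : Γ.V) (k j m : ℕ) (h : m = j + k + 1) :
    ∃ p : CQPath (extQuiver Γ) ((j, v₀) : (extQuiver Γ).V) ((m, w) : (extQuiver Γ).V),
      p.colors.toList = levelWord v₀ w k := by
  obtain ⟨p, hp⟩ := exists_replicate_path w k (j + 1) m (by omega)
  refine ⟨@CQPath.cons (extQuiver Γ) (Sum.inr (j, v₀, w)) ((m, w)) p, ?_⟩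
  have hc := congrArg (List.cons ((extQuiver Γ).u (Sum.inr (j, v₀, w) : (extQuiver Γ).A))) hp
  exact (toList_colors_cons (Γ := extQuiver Γ) (Sum.inr (j, v₀, w)) p).trans hc

lemma word_colors {v₀ w : Γ.V} {a b : (extQuiver Γ).V}
    (p : CQPath (extQuiver Γ) a b) (k : ℕ)
    (h : p.colors.toList = levelWord v₀ w k) :
    a = (b.1 - (k + 1), v₀) ∧ b.1 = a.1 + k + 1 ∧ b.2 = w := by
  cases p with
  | nil v => exact absurd h (by rw [toList_colors_nil, levelWord]; simp)
  | cons r p =>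
    rw [toList_colors_cons, levelWord] at h; replace h := List.cons.inj h
    obtain ⟨h1, h2⟩ := h
    rcases r with ⟨m, ar⟩ | ⟨m, v₁, v₂⟩
    · exact absurd h1 (by simp [extQuiver])
    · have hv1 : v₁ = v₀ := by
        have : (Sum.inr (v₁, v₂) : Γ.Cl ⊕ (Γ.V × Γ.V)) = Sum.inr (v₀, w) := h1
        simpa using congrArg (fun x => (Sum.getRight? x).map Prod.fst) this
      have hv2 : v₂ = w := by
        have : (Sum.inr (v₁, v₂) : Γ.Cl ⊕ (Γ.V × Γ.V)) = Sum.inr (v₀, w) := h1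
        simpa using congrArg (fun x => (Sum.getRight? x).map Prod.snd) this
      subst v₂
      obtain ⟨r1, r2, r3⟩ := replicate_colors p k h2
      have hb1 : b.1 = (m + 1) + k := r1
      have hb2 : b.2 = w := by
        rcases Nat.eq_zero_or_pos k with hk | hk
        · have : b = ((m + 1 : ℕ), w) := r2 hk
          rw [this]
        · exact (r3 (by omega)).2
      refine ⟨?_, ?_, hb2⟩
      · show ((m : ℕ), v₁) = (b.1 - (k + 1), v₀)
        rw [hv1]
        have : m = b.1 - (k + 1) := by omega
        rw [this]
      · show b.1 = m + k + 1
        omega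

lemma path_unique :
    ∀ (l : List ((extQuiver Γ).Cl)),
      (∀ x ∈ l, ∃ vw : Γ.V × Γ.V, x = Sum.inr vw) →
      ∀ {b : (extQuiver Γ).V}
        (σ τ : Σ a : (extQuiver Γ).V, CQPath (extQuiver Γ) a b),
        σ.2.colors.toList = l → τ.2.colors.toList = l → σ = τ := by
  intro l
  induction l with
  | nil =>
    intro _ b σ τ hσ hτ
    obtain ⟨a, p⟩ := σ
    obtain ⟨a', p'⟩ := τ
    cases p with
    | nil v =>
      cases p' with
      | nil v' => rfl
      | cons r' q' => exact absurd hτ (by rw [toList_colors_cons]; simp)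
    | cons r q => exact absurd hσ (by rw [toList_colors_cons]; simp)
  | cons x l ih =>
    intro hl b σ τ hσ hτ
    obtain ⟨⟨v, w⟩, rfl⟩ := hl x List.mem_cons_self
    obtain ⟨a, p⟩ := σ
    obtain ⟨a', p'⟩ := τ
    cases p with
    | nil _ => exact absurd hσ (by rw [toList_colors_nil]; simp)
    | cons r q =>
      cases p' with
      | nil _ => exact absurd hτ (by rw [toList_colors_nil]; simp)
      | cons r' q' =>
        rw [toList_colors_cons] at hσ hτ; replace hσ := List.cons.inj hσ; replace hτ := List.cons.inj hτ
        obtain ⟨hσ1, hσ2⟩ := hσ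
        obtain ⟨hτ1, hτ2⟩ := hτ
        rcases r with ⟨m, ar⟩ | ⟨m, v₁, v₂⟩
        · exact absurd hσ1 (by simp [extQuiver])
        rcases r' with ⟨m', ar'⟩ | ⟨m', v₁', v₂'⟩
        · exact absurd hτ1 (by simp [extQuiver])
        have hv1 : v₁ = v := by
          have : (Sum.inr (v₁, v₂) : Γ.Cl ⊕ (Γ.V × Γ.V)) = Sum.inr (v, w) := hσ1
          simpa using congrArg (fun x => (Sum.getRight? x).map Prod.fst) this
        have hv2 : v₂ = w := by
          have : (Sum.inr (v₁, v₂) : Γ.Cl ⊕ (Γ.V × Γ.V)) = Sum.inr (v, w) := hσ1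
          simpa using congrArg (fun x => (Sum.getRight? x).map Prod.snd) this
        have hv1' : v₁' = v := by
          have : (Sum.inr (v₁', v₂') : Γ.Cl ⊕ (Γ.V × Γ.V)) = Sum.inr (v, w) := hτ1
          simpa using congrArg (fun x => (Sum.getRight? x).map Prod.fst) this
        have hv2' : v₂' = w := by
          have : (Sum.inr (v₁', v₂') : Γ.Cl ⊕ (Γ.V × Γ.V)) = Sum.inr (v, w) := hτ1
          simpa using congrArg (fun x => (Sum.getRight? x).map Prod.snd) this
        subst v₁; subst v₂; subst v₁'; subst v₂'
        have hts : (⟨((m + 1 : ℕ), w), q⟩ : Σ a : (extQuiver Γ).V, CQPath (extQuiver Γ) a b)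
            = ⟨((m' + 1 : ℕ), w), q'⟩ :=
          ih (fun x hx => hl x (List.mem_cons_of_mem _ hx)) _ _ hσ2 hτ2
        have hmm : m = m' := by
          have := congrArg (fun s => s.1.1) hts
          simpa using this
        subst hmm
        injection hts with h1 h2
        rw [h2]

lemma levelWord_letters (v₀ w : Γ.V) (k : ℕ) :
    ∀ x ∈ levelWord (Γ := Γ) v₀ w k, ∃ vw : Γ.V × Γ.V, x = Sum.inr vw := by
  intro x hx
  rw [levelWord] at hx; replace hx := List.mem_cons.mp hx
  rcases hx with rfl | hx
  · exact ⟨_, rfl⟩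
  · exact ⟨_, List.eq_of_mem_replicate hx⟩

lemma exists_solve {K : Type*} [Field K] (y' : ℕ → K) (hy : y' 0 ≠ 0) (z : ℕ → K) :
    ∃ c : ℕ → K, ∀ t, ∑ k ∈ Finset.range (t + 1), c k * y' (t - k) = z t := by
  set Y : PowerSeries K := PowerSeries.mk y' with hY
  have hY0 : PowerSeries.constantCoeff Y ≠ 0 := by
    simpa [hY, PowerSeries.coeff_zero_eq_constantCoeff] using hy
  refine ⟨fun k => PowerSeries.coeff k (PowerSeries.mk z * Y⁻¹), fun t => ?_⟩
  have h1 : (PowerSeries.mk z * Y⁻¹) * Y = PowerSeries.mk z := by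
    rw [mul_assoc, PowerSeries.inv_mul_cancel _ hY0, mul_one]
  have h2 := congrArg (PowerSeries.coeff t) h1
  rw [PowerSeries.coeff_mul, PowerSeries.coeff_mk] at h2
  rw [Finset.Nat.sum_antidiagonal_eq_sum_range_succ_mk] at h2
  simpa [hY, PowerSeries.coeff_mk] using h2


lemma key_lemma {K : Type*} [Field K] {Γ : ColoredQuiver}
    (L : Set ((extQuiver Γ).V → K))
    (hact : ∀ y ∈ L, ∀ f : FreeMonoid (extQuiver Γ).Cl → K,
      Admissible (extQuiver Γ) f → cqAct y f ∈ L)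
    (i : ℕ) (y : (extQuiver Γ).V → K) (hyL : y ∈ L) (v₀ : Γ.V)
    (hy0 : y (i, v₀) ≠ 0)
    (hymin : ∀ j < i, ∀ v : Γ.V, y (j, v) = 0)
    (z₂ : (extQuiver Γ).V → K)
    (hz₂ : ∀ p : ℕ × Γ.V, z₂ p ≠ 0 → i + 1 ≤ p.1) :
    z₂ ∈ L := by
  classical
  -- solve the triangular system for each w
  have hsolve : ∀ w : Γ.V, ∃ c : ℕ → K,
      ∀ t, ∑ k ∈ Finset.range (t + 1), c k * y (i + (t - k), v₀) = z₂ (i + 1 + t, w) := by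
    intro w
    exact exists_solve (fun s => y (i + s, v₀)) (by simpa using hy0) (fun t => z₂ (i + 1 + t, w))
  choose c hc using hsolve
  -- the acting element f
  set f : FreeMonoid (extQuiver Γ).Cl → K := fun m =>
    if h : ∃ wk : Γ.V × ℕ, m.toList = levelWord v₀ wk.1 wk.2
    then c h.choose.1 h.choose.2 else 0 with hf
  have hf_eval : ∀ (m : FreeMonoid (extQuiver Γ).Cl) (w : Γ.V) (k : ℕ),
      m.toList = levelWord v₀ w k → f m = c w k := by
    intro m w k hm
    have hex : ∃ wk : Γ.V × ℕ, m.toList = levelWord v₀ wk.1 wk.2 := ⟨(w, k), hm⟩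
    rw [hf]
    simp only [dif_pos hex]
    have hsp := hm.symm.trans hex.choose_spec
    obtain ⟨hw, hk⟩ := levelWord_inj hsp
    have hpq : ((w, k) : Γ.V × ℕ) = hex.choose := Prod.ext_iff.mpr ⟨hw, hk⟩
    exact (congrArg (fun wk : Γ.V × ℕ => c wk.1 wk.2) hpq).symm
  have hf_supp : ∀ m : FreeMonoid (extQuiver Γ).Cl, f m ≠ 0 →
      ∃ (w : Γ.V) (k : ℕ), m.toList = levelWord v₀ w k := by
    intro m hm
    by_cases hex : ∃ wk : Γ.V × ℕ, m.toList = levelWord v₀ wk.1 wk.2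
    · obtain ⟨⟨w, k⟩, hwk⟩ := hex; exact ⟨w, k, hwk⟩
    · exfalso
      apply hm
      simp only [hf]
      exact dif_neg hex
  -- the canonical path elements
  have he : ∀ (j : ℕ) (ww : Γ.V) (k : ℕ), k < j →
      ∃ σ : Σ a : (extQuiver Γ).V, CQPath (extQuiver Γ) a ((j, ww) : (extQuiver Γ).V),
        σ.2.colors.toList = levelWord v₀ ww k ∧ σ.1 = ((j - (k + 1) : ℕ), v₀) := by
    intro j ww k hk
    obtain ⟨p, hp⟩ := exists_word_path (Γ := Γ) v₀ ww k (j - (k + 1)) j (by omega)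
    exact ⟨⟨((j - (k + 1) : ℕ), v₀), p⟩, hp, rfl⟩
  set e : ∀ (j : ℕ) (ww : Γ.V), ℕ →
      Σ a : (extQuiver Γ).V, CQPath (extQuiver Γ) a ((j, ww) : (extQuiver Γ).V) :=
    fun j ww k =>
      if h : k < j then (he j ww k h).choose
      else ⟨((j, ww) : (extQuiver Γ).V), CQPath.nil _⟩ with he_def
  have he_spec : ∀ (j : ℕ) (ww : Γ.V) (k : ℕ) (h : k < j),
      (e j ww k).2.colors.toList = levelWord v₀ ww k ∧
      (e j ww k).1 = ((j - (k + 1) : ℕ), v₀) := by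
    intro j ww k h
    have hek : e j ww k = (he j ww k h).choose := by
      simp only [he_def]
      rw [dif_pos h]
    rw [hek]
    exact (he j ww k h).choose_spec
  -- classification of the support
  have hclass : ∀ (j : ℕ) (ww : Γ.V)
      (σ : Σ a : (extQuiver Γ).V, CQPath (extQuiver Γ) a ((j, ww) : (extQuiver Γ).V)),
      f σ.2.colors ≠ 0 → ∃ k, k < j ∧ σ = e j ww k := by
    intro j ww σ hσ
    obtain ⟨w, k, hm⟩ := hf_supp _ hσ
    obtain ⟨ha, hb1, hb2⟩ := word_colors σ.2 k hm
    have hww : ww = w := hb2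
    subst hww
    have hkj : k < j := by
      have : ((j, ww) : (extQuiver Γ).V).1 = σ.1.1 + k + 1 := hb1
      simp at this
      omega
    refine ⟨k, hkj, ?_⟩
    exact (path_unique (levelWord v₀ ww k) (levelWord_letters v₀ ww k) σ (e j ww k)
      hm (he_spec j ww k hkj).1)
  have hsub : ∀ (j : ℕ) (ww : Γ.V),
      {σ : Σ a : (extQuiver Γ).V, CQPath (extQuiver Γ) a ((j, ww) : (extQuiver Γ).V) |
        f σ.2.colors ≠ 0} ⊆ ↑((Finset.range j).image (e j ww)) := by
    intro j ww σ hσ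
    obtain ⟨k, hk, rfl⟩ := hclass j ww σ hσ
    simp only [Finset.coe_image, Set.mem_image, Finset.mem_coe, Finset.mem_range]
    exact ⟨k, by simpa using hk, rfl⟩
  -- admissibility
  have hadm : Admissible (extQuiver Γ) f := by
    intro v
    obtain ⟨j, ww⟩ := v
    exact Set.Finite.subset (Finset.finite_toSet _) (hsub j ww)
  -- evaluation of the action
  have heval : ∀ (j : ℕ) (ww : Γ.V),
      cqAct y f ((j, ww) : (extQuiver Γ).V)
        = ∑ k ∈ Finset.range j, c ww k * y ((j - (k + 1) : ℕ), v₀) := by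
    intro j ww
    have hinj : ∀ k ∈ Finset.range j, ∀ k' ∈ Finset.range j,
        e j ww k = e j ww k' → k = k' := by
      intro k hk k' hk' hekk
      rw [Finset.mem_range] at hk hk'
      have h1 := (he_spec j ww k hk).2
      have h2 := (he_spec j ww k' hk').2
      rw [hekk] at h1
      rw [h2] at h1
      have : j - (k' + 1) = j - (k + 1) := by
        have := congrArg Prod.fst h1
        simpa using this
      omega
    show ∑ᶠ p : Σ a : (extQuiver Γ).V, CQPath (extQuiver Γ) a ((j, ww) : (extQuiver Γ).V), f p.2.colors * y p.1 = _
    rw [finsum_eq_sum_of_support_subset _ (s := (Finset.range j).image (e j ww)) ?_]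
    · rw [Finset.sum_image hinj]
      refine Finset.sum_congr rfl ?_
      intro k hk
      rw [Finset.mem_range] at hk
      obtain ⟨hcol, hsrc⟩ := he_spec j ww k hk
      rw [hf_eval _ ww k hcol, hsrc]
    · intro σ hσ
      have : f σ.2.colors ≠ 0 := by
        intro h0
        apply hσ
        simp [h0]
      exact hsub j ww this
  -- conclude
  have hfz : cqAct y f = z₂ := by
    funext p
    obtain ⟨j, ww⟩ := p
    rw [heval j ww]
    by_cases hj : j ≤ i
    · have hz : z₂ (j, ww) = 0 := by
        by_contra h
        have := hz₂ (j, ww) h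
        simp at this
        omega
      rw [hz]
      refine Finset.sum_eq_zero ?_
      intro k hk
      rw [Finset.mem_range] at hk
      rw [hymin (j - (k + 1)) (by omega) v₀, mul_zero]
    · push_neg at hj
      set t : ℕ := j - i - 1 with ht
      have hjt : j = i + 1 + t := by omega
      rw [hjt]
      have hstep : ∑ k ∈ Finset.range (i + 1 + t), c ww k * y ((i + 1 + t - (k + 1) : ℕ), v₀)
          = ∑ k ∈ Finset.range (t + 1), c ww k * y ((i + 1 + t - (k + 1) : ℕ), v₀) := by
        refine (Finset.sum_subset ?_ ?_).symm
        · intro k hk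
          rw [Finset.mem_range] at hk ⊢
          omega
        · intro k hk hk'
          rw [Finset.mem_range] at hk hk'
          rw [hymin (i + 1 + t - (k + 1)) (by omega) v₀, mul_zero]
      rw [hstep]
      have hstep2 : ∑ k ∈ Finset.range (t + 1), c ww k * y ((i + 1 + t - (k + 1) : ℕ), v₀)
          = ∑ k ∈ Finset.range (t + 1), c ww k * y ((i + (t - k) : ℕ), v₀) := by
        refine Finset.sum_congr rfl ?_
        intro k hk
        rw [Finset.mem_range] at hk
        have : i + 1 + t - (k + 1) = i + (t - k) := by omega
        rw [this]
      rw [hstep2]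
      exact hc ww t
  rw [← hfz]
  exact hact y hyL f hadm

end SubDecompAux

/-- every nonzero `F_{Γ̃}`-submodule `L` of `M_{Γ̃}` decomposes as
`L = (L ∩ M_i) ⊕ M_{≥ i+1}`, where `i` is the smallest level met by the support of
an element of `L`. -/
theorem submodule_decomposition (K : Type*) [Field K] (Γ : ColoredQuiver)
    (L : Set ((extQuiver Γ).V → K))
    (h0 : (0 : (extQuiver Γ).V → K) ∈ L)
    (hadd : ∀ y ∈ L, ∀ z ∈ L, y + z ∈ L)
    (hsmul : ∀ (a : K), ∀ y ∈ L, a • y ∈ L)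
    (hact : ∀ y ∈ L, ∀ f : FreeMonoid (extQuiver Γ).Cl → K,
      Admissible (extQuiver Γ) f → cqAct y f ∈ L)
    (hne : ∃ y ∈ L, y ≠ 0) :
    ∃ i : ℕ,
      (∃ y ∈ L, ∃ v : Γ.V, y (i, v) ≠ 0) ∧
      (∀ j < i, ∀ y ∈ L, ∀ v : Γ.V, y (j, v) = 0) ∧
      (∀ z : (extQuiver Γ).V → K, z ∈ L ↔
        ∃ z₁ ∈ L, ∃ z₂ : (extQuiver Γ).V → K,
          (∀ p : ℕ × Γ.V, z₁ p ≠ 0 → p.1 = i) ∧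
          (∀ p : ℕ × Γ.V, z₂ p ≠ 0 → i + 1 ≤ p.1) ∧
          z = z₁ + z₂) := by
  classical
  have hP : ∃ i : ℕ, ∃ y ∈ L, ∃ v : Γ.V, y (i, v) ≠ 0 := by
    obtain ⟨y, hyL, hy⟩ := hne
    have : ∃ p : (extQuiver Γ).V, y p ≠ 0 := by
      by_contra h
      push_neg at h
      exact hy (funext h)
    obtain ⟨⟨j, v⟩, hp⟩ := this
    exact ⟨j, y, hyL, v, hp⟩
  set i : ℕ := Nat.find hP with hi
  have hspec : ∃ y ∈ L, ∃ v : Γ.V, y (i, v) ≠ 0 := Nat.find_spec hP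
  have hmin : ∀ j < i, ∀ y ∈ L, ∀ v : Γ.V, y (j, v) = 0 := by
    intro j hj y hyL v
    by_contra h
    exact Nat.find_min hP hj ⟨y, hyL, v, h⟩
  obtain ⟨y, hyL, v₀, hy0⟩ := hspec
  have hymin : ∀ j < i, ∀ v : Γ.V, y (j, v) = 0 := fun j hj v => hmin j hj y hyL v
  -- everything supported on levels ≥ i+1 lies in L
  have hkey : ∀ z₂ : (extQuiver Γ).V → K,
      (∀ p : ℕ × Γ.V, z₂ p ≠ 0 → i + 1 ≤ p.1) → z₂ ∈ L :=
    fun z₂ hz₂ => SubDecompAux.key_lemma L hact i y hyL v₀ hy0 hymin z₂ hz₂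
  refine ⟨i, ⟨y, hyL, v₀, hy0⟩, hmin, ?_⟩
  intro z
  constructor
  · intro hzL
    set z₂ : (extQuiver Γ).V → K := fun p => if i + 1 ≤ p.1 then z p else 0 with hz₂def
    have hz₂supp : ∀ p : ℕ × Γ.V, z₂ p ≠ 0 → i + 1 ≤ p.1 := by
      intro p hp
      by_contra h
      apply hp
      simp only [hz₂def, if_neg h]
    have hz₂L : z₂ ∈ L := hkey z₂ hz₂supp
    set z₁ : (extQuiver Γ).V → K := z + (-1 : K) • z₂ with hz₁def
    have hz₁L : z₁ ∈ L := hadd z hzL _ (hsmul (-1) z₂ hz₂L)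
    refine ⟨z₁, hz₁L, z₂, ?_, hz₂supp, ?_⟩
    · intro p hp
      by_contra hne'
      apply hp
      rcases Nat.lt_or_ge p.1 i with h | h
      · have hz0 : z p = 0 := by
          have := hmin p.1 h z hzL p.2
          simpa using this
        have hz20 : z₂ p = 0 := by
          simp only [hz₂def]
          rw [if_neg (by omega)]
        show z p + (-1 : K) * z₂ p = 0
        simp only [hz₁def, Pi.add_apply, Pi.smul_apply, hz0, hz20, smul_eq_mul]
        ring
      · have h' : i + 1 ≤ p.1 := by omega
        have hz2 : z₂ p = z p := by simp only [hz₂def, if_pos h']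
        show z p + (-1 : K) * z₂ p = 0
        simp only [hz₁def, Pi.add_apply, Pi.smul_apply, hz2, smul_eq_mul]
        ring
    · funext p
      simp only [hz₁def, Pi.add_apply, Pi.smul_apply, smul_eq_mul]
      ring
  · rintro ⟨z₁, hz₁L, z₂, _, hz₂supp, rfl⟩
    exact hadd z₁ hz₁L z₂ (hkey z₂ hz₂supp)
end

section
/- Let M be a module over a ring with a descending filtration M = M₀ ⊇ M₁ ⊇ M₂ ⊇ ⋯ such that (a) every nonzero submodule of M contains some M_{i}, and (b) each quotient M_i / M_{i+1} is a noetherian module. Then M is a noetherian module. -/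
open scoped BigOperators Classical

lemma quot_noetherian_aux (R M : Type*) [Ring R] [AddCommGroup M] [Module R M]
    (F : ℕ → Submodule R M) (h0 : F 0 = ⊤) (hdec : ∀ i, F (i + 1) ≤ F i)
    (hb : ∀ i, IsNoetherian R
      ((F i) ⧸ (Submodule.comap (F i).subtype (F (i + 1))))) :
    ∀ i, IsNoetherian R (M ⧸ F i) := by
  intro i
  induction i with
  | zero =>
    haveI : Subsingleton (M ⧸ F 0) := by
      rw [Submodule.Quotient.subsingleton_iff]; exact h0
    infer_instance
  | succ i ih =>
    haveI := hb i
    haveI := ih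
    refine isNoetherian_of_range_eq_ker
      (Submodule.liftQ _ ((F (i+1)).mkQ.comp (F i).subtype) (by rw [LinearMap.ker_comp, Submodule.ker_mkQ]))
      (Submodule.mapQ (F (i+1)) (F i) LinearMap.id (hdec i)) ?_
    ext x
    constructor
    · rintro ⟨y, rfl⟩
      obtain ⟨z, rfl⟩ := Submodule.mkQ_surjective _ y
      simp [Submodule.liftQ_apply, LinearMap.mem_ker, Submodule.mapQ_apply,
        Submodule.Quotient.mk_eq_zero]
    · intro hx
      obtain ⟨y, rfl⟩ := Submodule.mkQ_surjective _ x
      simp only [LinearMap.mem_ker, Submodule.mapQ_apply, LinearMap.id_coe, id_eq,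
        Submodule.mkQ_apply, Submodule.Quotient.mk_eq_zero] at hx
      exact ⟨Submodule.Quotient.mk ⟨y, hx⟩, by simp [Submodule.liftQ_apply]⟩

/-- a module with a descending filtration `M = M₀ ⊇ M₁ ⊇ ⋯` such that
every nonzero submodule contains some `M_i` and each `M_i/M_{i+1}` is noetherian, is
itself noetherian. -/
theorem noetherian_of_filtration (R M : Type*) [Ring R] [AddCommGroup M] [Module R M]
    (F : ℕ → Submodule R M) (h0 : F 0 = ⊤) (hdec : ∀ i, F (i + 1) ≤ F i)
    (ha : ∀ N : Submodule R M, N ≠ ⊥ → ∃ i, F i ≤ N)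
    (hb : ∀ i, IsNoetherian R
      ((F i) ⧸ (Submodule.comap (F i).subtype (F (i + 1))))) :
    IsNoetherian R M := by
  have hq := quot_noetherian_aux R M F h0 hdec hb
  rw [← monotone_stabilizes_iff_noetherian]
  intro f
  by_cases hbot : ∀ n, f n = ⊥
  · exact ⟨0, fun m _ => by rw [hbot, hbot]⟩
  push_neg at hbot
  obtain ⟨n0, hn0⟩ := hbot
  obtain ⟨i, hi⟩ := ha (f n0) hn0
  haveI := hq i
  obtain ⟨n1, hn1⟩ := (monotone_stabilizes_iff_noetherian.mpr (hq i))
    ⟨fun n => (f n).map (F i).mkQ, fun a b hab => Submodule.map_mono (f.mono hab)⟩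
  refine ⟨max n0 n1, fun m hm => ?_⟩
  have key : ∀ k, n0 ≤ k → Submodule.comap (F i).mkQ (Submodule.map (F i).mkQ (f k)) = f k := by
    intro k hk
    rw [Submodule.comap_map_eq, Submodule.ker_mkQ, sup_eq_left]
    exact hi.trans (f.mono hk)
  have h1 : (f (max n0 n1)).map (F i).mkQ = (f m).map (F i).mkQ :=
    (hn1 (max n0 n1) (le_max_right n0 n1)).symm.trans
      (hn1 m (le_trans (le_max_right n0 n1) hm))
  rw [← key _ (le_max_left n0 n1), ← key m (le_trans (le_max_left n0 n1) hm), h1]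
end
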